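/- Let {f_t : t ∈ T} be an arbitrary family of functions f_t : ℝⁿ → ℝ̄ and set h := inf_{t∈T} f_t*. Then for every y ∈ ℝⁿ, (co h)(y) = inf{ Σ_{t∈supp λ} λ_t f_t*(y_t) : λ ∈ Δ(T), points y_t ∈ ℝⁿ with Σ_{t∈supp λ} λ_t y_t = y }. Moreover, the infimum is unchanged if it is restricted to λ ∈ Δ(T) with #supp λ ≤ min{n+1, #T}. -/

import Mathlib

open scoped RealInnerProductSpace Pointwise
open Set Filter

noncomputable section

/-- `En n` is the Euclidean space `ℝⁿ`. -/
abbrev En (n : ℕ) := EuclideanSpace ℝ (Fin n)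

/-- The epigraph of an extended-real-valued function. -/
def epiS {n : ℕ} (g : En n → EReal) : Set (En n × ℝ) := {p | g p.1 ≤ (p.2 : EReal)}

/-- The Fenchel conjugate `g*`. -/
def conjF {n : ℕ} (g : En n → EReal) (y : En n) : EReal :=
  ⨆ x, (⟪y, x⟫ : EReal) - g x

/-- The effective domain of `g`. -/
def dm {n : ℕ} (g : En n → EReal) : Set (En n) := {x | g x < ⊤}

/-- `g` is proper: never `-∞` and not identically `+∞`. -/
def ProperF {n : ℕ} (g : En n → EReal) : Prop := (∃ x, g x < ⊤) ∧ ∀ x, ⊥ < g x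

/-- The ε-subdifferential `∂_ε g(x)` (empty when `g x` is not finite). -/
def eSub {n : ℕ} (g : En n → EReal) (ε : ℝ) (x : En n) : Set (En n) :=
  {y | ∃ r : ℝ, g x = (r : EReal) ∧ ∀ z, ((⟪y, z - x⟫ + r - ε : ℝ) : EReal) ≤ g z}

/-- The indicator function `δ_A` (0 on `A`, `+∞` outside). -/
def indE {n : ℕ} (A : Set (En n)) (x : En n) : EReal :=
  Set.indicator Aᶜ (fun _ => (⊤ : EReal)) x

/-- The ε-normal set `N^ε_A(x) = ∂_ε δ_A(x)`. -/
def eNormal {n : ℕ} (A : Set (En n)) (ε : ℝ) (x : En n) : Set (En n) :=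
  eSub (indE A) ε x

/-- `Γ₀`: proper, lower semicontinuous, convex. -/
def Gamma0 {n : ℕ} (g : En n → EReal) : Prop :=
  ProperF g ∧ LowerSemicontinuous g ∧ Convex ℝ (epiS g)

/-- Epi-pointed: `g*` is proper with nonempty interior of its domain. -/
def EpiPointed {n : ℕ} (g : En n → EReal) : Prop :=
  ProperF (conjF g) ∧ (interior (dm (conjF g))).Nonempty

/-- The closed convex hull `c̄o g`: the function whose epigraph is the closed
convex hull of `epi g`. -/
def cchF {n : ℕ} (g : En n → EReal) (x : En n) : EReal :=
  sInf ((fun r : ℝ => (r : EReal)) '' {r | (x, r) ∈ closure (convexHull ℝ (epiS g))})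

/-- The convex hull `co g`: the function whose epigraph is the convex hull of `epi g`. -/
def coF {n : ℕ} (g : En n → EReal) (x : En n) : EReal :=
  sInf ((fun r : ℝ => (r : EReal)) '' {r | (x, r) ∈ convexHull ℝ (epiS g)})

/-- Membership in the generalized simplex `Δ(T)`. -/
def inSimplex {T : Type*} (l : T →₀ ℝ) : Prop :=
  (∀ t, 0 ≤ l t ∧ l t ≤ 1) ∧ (∑ t ∈ l.support, l t) = 1

/-- Membership in `Δ^ε(T)`. -/
def inDelta {T : Type*} (ε : ℝ) (e : T →₀ ℝ) : Prop :=
  (∀ t, 0 ≤ e t ∧ e t ≤ ε) ∧ (∑ t ∈ e.support, e t) = ε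

end

section Micro
variable {n : ℕ}

lemma term_le (g : En n → EReal) (y x : En n) : (⟪y, x⟫ : EReal) - g x ≤ conjF g y :=
  le_iSup (fun x => (⟪y, x⟫ : EReal) - g x) x

lemma sub_eq_bot_iff (r : ℝ) (b : EReal) : (r : EReal) - b = ⊥ ↔ b = ⊤ := by
  cases b with
  | bot => simp
  | coe b => simp [← EReal.coe_sub]
  | top => simp

lemma conj_bot_forall {g : En n → EReal} {x : En n} (h : conjF g x = ⊥) : ∀ z, g z = ⊤ := by
  intro z
  have h1 : (⟪x, z⟫ : EReal) - g z ≤ ⊥ := h ▸ term_le g x z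
  exact (sub_eq_bot_iff _ _).mp (le_bot_iff.mp h1)

lemma conj_bot_everywhere {g : En n → EReal} {x : En n} (h : conjF g x = ⊥) (z : En n) :
    conjF g z = ⊥ := by
  have := conj_bot_forall h
  simp [conjF, this]

lemma coe_sum' {ι : Type*} (s : Finset ι) (v : ι → ℝ) :
    ((∑ i ∈ s, v i : ℝ) : EReal) = ∑ i ∈ s, ((v i : ℝ) : EReal) := by
  induction s using Finset.cons_induction with
  | empty => simp
  | cons a s ha ih => rw [Finset.sum_cons, Finset.sum_cons, EReal.coe_add, ih]

lemma le_coe_of_forall_eps {a : EReal} {r : ℝ} (h : ∀ ε : ℝ, 0 < ε → a ≤ ((r + ε : ℝ) : EReal)) :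
    a ≤ (r : EReal) := by
  rw [← EReal.le_of_forall_lt_iff_le]
  intro z hz
  have hz' : r < z := by exact_mod_cast hz
  simpa using h (z - r) (sub_pos.2 hz')

lemma sum_ne_bot {ι : Type*} (s : Finset ι) (g : ι → EReal) (h : ∀ i ∈ s, g i ≠ ⊥) :
    ∑ i ∈ s, g i ≠ ⊥ := by
  induction s using Finset.cons_induction with
  | empty => simp
  | cons a s ha ih =>
    rw [Finset.sum_cons]
    rw [Ne, EReal.add_eq_bot_iff]
    push_neg
    exact ⟨h a (Finset.mem_cons_self a s), ih fun i hi => h i (Finset.mem_cons_of_mem hi)⟩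

lemma sum_eq_top {ι : Type*} (s : Finset ι) (g : ι → EReal) (h : ∀ i ∈ s, g i ≠ ⊥)
    (h2 : ∃ i ∈ s, g i = ⊤) : ∑ i ∈ s, g i = ⊤ := by
  induction s using Finset.cons_induction with
  | empty => simp at h2
  | cons a s ha ih =>
    rw [Finset.sum_cons]
    obtain ⟨i, hi, hit⟩ := h2
    rcases Finset.mem_cons.mp hi with rfl | hi'
    · rw [hit]
      exact EReal.top_add_of_ne_bot (sum_ne_bot s g fun j hj => h j (Finset.mem_cons_of_mem hj))
    · rw [ih (fun j hj => h j (Finset.mem_cons_of_mem hj)) ⟨i, hi', hit⟩]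
      exact EReal.add_top_of_ne_bot (h a (Finset.mem_cons_self a s))

lemma conj_convex {g : En n → EReal} {x₁ x₂ : En n} {a b s₁ s₂ : ℝ}
    (ha : 0 ≤ a) (hb : 0 ≤ b) (hab : a + b = 1)
    (h1 : conjF g x₁ ≤ (s₁ : EReal)) (h2 : conjF g x₂ ≤ (s₂ : EReal)) :
    conjF g (a • x₁ + b • x₂) ≤ ((a * s₁ + b * s₂ : ℝ) : EReal) := by
  refine iSup_le fun z => ?_
  cases hgz : g z with
  | bot =>
    exfalso
    have h3 : (⟪x₁, z⟫ : EReal) - g z ≤ (s₁ : EReal) := (term_le g x₁ z).trans h1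
    rw [hgz] at h3
    rw [EReal.coe_sub_bot] at h3
    simp at h3
  | top => rw [EReal.sub_top]; exact bot_le
  | coe c =>
    have h3 : (⟪x₁, z⟫ : ℝ) - c ≤ s₁ := by
      have := (term_le g x₁ z).trans h1
      rw [hgz, ← EReal.coe_sub] at this
      exact_mod_cast this
    have h4 : (⟪x₂, z⟫ : ℝ) - c ≤ s₂ := by
      have := (term_le g x₂ z).trans h2
      rw [hgz, ← EReal.coe_sub] at this
      exact_mod_cast this
    rw [← EReal.coe_sub, EReal.coe_le_coe_iff]
    have hin : ⟪a • x₁ + b • x₂, z⟫ = a * ⟪x₁, z⟫ + b * ⟪x₂, z⟫ := by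
      rw [inner_add_left, real_inner_smul_left, real_inner_smul_left]
    rw [hin]
    have e3 := mul_le_mul_of_nonneg_left h3 ha
    have e4 := mul_le_mul_of_nonneg_left h4 hb
    have hc : a * c + b * c = c := by rw [← add_mul, hab, one_mul]
    nlinarith [e3, e4, hc]

lemma finset_card_le_enat {T : Type*} (s : Finset T) : (s.card : ℕ∞) ≤ ENat.card T := by
  rw [← Set.encard_coe_eq_coe_finsetCard, ← Set.encard_univ]
  exact Set.encard_mono (Set.subset_univ _)

end Micro

section Key
variable {n : ℕ}

/-- One Carathéodory reduction step. -/
lemma cara_step {ι : Type*} [DecidableEq ι] (A : Finset ι) (w : ι → ℝ) (p : ι → En n)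
    (s : ι → ℝ) (y : En n)
    (hpos : ∀ i ∈ A, 0 < w i) (hsum : (∑ i ∈ A, w i) = 1)
    (hbary : (∑ i ∈ A, w i • p i) = y)
    (σ : ι → ℝ) (hσ1 : ∑ x ∈ A, σ x = 0) (hσp : ∑ x ∈ A, σ x • p x = 0)
    (hσs : 0 ≤ ∑ x ∈ A, σ x * s x) (hσne : ∃ x ∈ A, σ x ≠ 0) :
    ∃ (A' : Finset ι) (w' : ι → ℝ), A' ⊆ A ∧ A'.card < A.card ∧ (∀ i ∈ A', 0 < w' i) ∧
      (∑ i ∈ A', w' i) = 1 ∧ (∑ i ∈ A', w' i • p i) = y ∧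
      (∑ i ∈ A', w' i * s i) ≤ ∑ i ∈ A, w i * s i := by
  have hexpos : ∃ x ∈ A, 0 < σ x := by
    by_contra hc
    push_neg at hc
    obtain ⟨x, hx, hxne⟩ := hσne
    exact hxne ((Finset.sum_eq_zero_iff_of_nonpos (fun i hi => hc i hi)).mp hσ1 x hx)
  set P := A.filter (fun x => 0 < σ x) with hP
  have hPne : P.Nonempty := by
    obtain ⟨x, hx, hxp⟩ := hexpos
    exact ⟨x, Finset.mem_filter.mpr ⟨hx, hxp⟩⟩
  obtain ⟨i₀, hi₀P, hmin⟩ := Finset.exists_min_image P (fun x => w x / σ x) hPne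
  obtain ⟨hi₀A, hσi₀⟩ := Finset.mem_filter.mp hi₀P
  set c := w i₀ / σ i₀ with hc
  have hcpos : 0 < c := div_pos (hpos i₀ hi₀A) hσi₀
  set w' := fun x => w x - c * σ x with hw'
  have hw'nonneg : ∀ x ∈ A, 0 ≤ w' x := by
    intro x hx
    by_cases hσx : 0 < σ x
    · have hmx := hmin x (Finset.mem_filter.mpr ⟨hx, hσx⟩)
      rw [hw']
      simp only [sub_nonneg]
      calc c * σ x ≤ (w x / σ x) * σ x := mul_le_mul_of_nonneg_right hmx hσx.le
        _ = w x := div_mul_cancel₀ _ hσx.ne'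
    · push_neg at hσx
      have hcs : c * σ x ≤ 0 := mul_nonpos_of_nonneg_of_nonpos hcpos.le hσx
      show (0:ℝ) ≤ w x - c * σ x
      linarith [hpos x hx]
  have hw'i₀ : w' i₀ = 0 := by
    rw [hw']
    simp only
    rw [hc, div_mul_cancel₀ _ hσi₀.ne', sub_self]
  set A' := A.filter (fun x => w' x ≠ 0) with hA'
  have hsub : A' ⊆ A := Finset.filter_subset _ _
  have hi₀notin : i₀ ∉ A' := by
    rw [hA']
    simp [hw'i₀]
  have hcardlt : A'.card < A.card :=
    Finset.card_lt_card (Finset.ssubset_iff_of_subset hsub |>.mpr ⟨i₀, hi₀A, hi₀notin⟩)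
  have hzero : ∀ x ∈ A, x ∉ A' → w' x = 0 := by
    intro x hx hxn
    by_contra hne
    exact hxn (Finset.mem_filter.mpr ⟨hx, hne⟩)
  have e1 : ∑ x ∈ A, w' x = 1 := by
    rw [hw']
    simp only
    rw [Finset.sum_sub_distrib, ← Finset.mul_sum, hσ1, hsum, mul_zero, sub_zero]
  have e2 : ∑ x ∈ A, w' x • p x = y := by
    rw [hw']
    simp only [sub_smul]
    rw [Finset.sum_sub_distrib, hbary]
    have h5 : ∑ x ∈ A, (c * σ x) • p x = c • ∑ x ∈ A, σ x • p x := by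
      rw [Finset.smul_sum]
      exact Finset.sum_congr rfl fun x _ => by rw [smul_smul]
    rw [h5, hσp, smul_zero, sub_zero]
  have e3 : ∑ x ∈ A, w' x * s x ≤ ∑ x ∈ A, w x * s x := by
    rw [hw']
    simp only [sub_mul]
    rw [Finset.sum_sub_distrib]
    have h5 : ∑ x ∈ A, c * σ x * s x = c * ∑ x ∈ A, σ x * s x := by
      rw [Finset.mul_sum]
      exact Finset.sum_congr rfl fun x _ => by ring
    rw [h5]
    nlinarith [hσs, hcpos]
  refine ⟨A', w', hsub, hcardlt, ?_, ?_, ?_, ?_⟩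
  · intro x hx
    exact lt_of_le_of_ne (hw'nonneg x (hsub hx)) (Ne.symm (Finset.mem_filter.mp hx).2)
  · rw [Finset.sum_subset hsub (fun x hx hxn => hzero x hx hxn)]
    exact e1
  · rw [Finset.sum_subset hsub (fun x hx hxn => by rw [hzero x hx hxn, zero_smul])]
    exact e2
  · calc ∑ i ∈ A', w' i * s i = ∑ i ∈ A, w' i * s i := by
          rw [Finset.sum_subset hsub (fun x hx hxn => by rw [hzero x hx hxn, zero_mul])]
      _ ≤ ∑ i ∈ A, w i * s i := e3

end Key

section KeyMain
variable {n : ℕ} {T : Type*}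

lemma key_lemma (f : T → En n → EReal) (y : En n) :
    ∀ (N : ℕ) {ι : Type*} [DecidableEq ι] (A : Finset ι) (w : ι → ℝ) (p : ι → En n)
      (t : ι → T) (s : ι → ℝ),
      A.card ≤ N →
      (∀ i ∈ A, 0 < w i) → (∑ i ∈ A, w i) = 1 → (∑ i ∈ A, w i • p i) = y →
      (∀ i ∈ A, conjF (f (t i)) (p i) ≤ (s i : EReal)) →
      ∃ (l : T →₀ ℝ) (ys : T → En n), inSimplex l ∧
        ((l.support.card : ℕ∞) ≤ min ((n : ℕ∞) + 1) (ENat.card T)) ∧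
        (∑ u ∈ l.support, l u • ys u) = y ∧
        (∑ u ∈ l.support, (l u : EReal) * conjF (f u) (ys u)) ≤
          ((∑ i ∈ A, w i * s i : ℝ) : EReal) := by
  intro N
  induction N with
  | zero =>
    intro ι _ A w p t s hcard _ hsum _ _
    rw [Nat.le_zero, Finset.card_eq_zero] at hcard
    rw [hcard] at hsum
    simp at hsum
  | succ N ih =>
    intro ι _ A w p t s hcard hpos hsum hbary hle
    classical
    by_cases hbot : ∃ i ∈ A, conjF (f (t i)) (p i) = ⊥
    · obtain ⟨i, hi, hib⟩ := hbot
      refine ⟨Finsupp.single (t i) 1, fun _ => y, ⟨?_, ?_⟩, ?_, ?_, ?_⟩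
      · intro u
        rw [Finsupp.single_apply]
        split <;> norm_num
      · rw [Finsupp.support_single_ne_zero _ one_ne_zero, Finset.sum_singleton,
          Finsupp.single_eq_same]
      · rw [Finsupp.support_single_ne_zero _ one_ne_zero]
        simp only [Finset.card_singleton, Nat.cast_one]
        refine le_min ?_ ?_
        · exact le_add_self
        · have h1 := finset_card_le_enat ({t i} : Finset T)
          simpa using h1
      · rw [Finsupp.support_single_ne_zero _ one_ne_zero, Finset.sum_singleton,
          Finsupp.single_eq_same, one_smul]
      · rw [Finsupp.support_single_ne_zero _ one_ne_zero, Finset.sum_singleton,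
          Finsupp.single_eq_same, conj_bot_everywhere hib y]
        simp
    · by_cases hinj : Set.InjOn t A
      · by_cases hbig : n + 1 < A.card
        · -- Carathéodory step
          have hdep : ¬ LinearIndependent ℝ (fun i : A => ((p i, 1) : En n × ℝ)) := by
            intro hli
            have hc := hli.fintype_card_le_finrank
            rw [Fintype.card_coe] at hc
            have hrank : Module.finrank ℝ (En n × ℝ) = n + 1 := by simp
            omega
          rw [Fintype.not_linearIndependent_iff] at hdep
          obtain ⟨g, hgsum, i₁, hg₁⟩ := hdep
          set μ : ι → ℝ := fun x => if hx : x ∈ A then g ⟨x, hx⟩ else 0 with hμ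
          have hμA : ∀ (x : ι) (hx : x ∈ A), μ x = g ⟨x, hx⟩ := fun x hx => dif_pos hx
          have hμsum : ∑ x ∈ A, μ x • ((p x, 1) : En n × ℝ) = 0 := by
            rw [← Finset.sum_coe_sort A (fun x => μ x • ((p x, 1) : En n × ℝ)), ← hgsum]
            refine Finset.sum_congr rfl fun x _ => ?_
            rw [hμA x.1 x.2]
          have hμp : ∑ x ∈ A, μ x • p x = 0 := by
            have := congrArg Prod.fst hμsum
            rw [Prod.fst_sum] at this
            simpa using this
          have hμ1 : ∑ x ∈ A, μ x = 0 := by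
            have := congrArg Prod.snd hμsum
            rw [Prod.snd_sum] at this
            simpa [smul_eq_mul] using this
          have hμne : ∃ x ∈ A, μ x ≠ 0 := ⟨i₁.1, i₁.2, by rw [hμA i₁.1 i₁.2]; simpa using hg₁⟩
          have hstep : ∃ (A' : Finset ι) (w' : ι → ℝ), A' ⊆ A ∧ A'.card < A.card ∧
              (∀ i ∈ A', 0 < w' i) ∧ (∑ i ∈ A', w' i) = 1 ∧ (∑ i ∈ A', w' i • p i) = y ∧
              (∑ i ∈ A', w' i * s i) ≤ ∑ i ∈ A, w i * s i := by
            by_cases hsign : 0 ≤ ∑ x ∈ A, μ x * s x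
            · exact cara_step A w p s y hpos hsum hbary μ hμ1 hμp hsign hμne
            · refine cara_step A w p s y hpos hsum hbary (fun x => -μ x) ?_ ?_ ?_ ?_
              · simp only [Finset.sum_neg_distrib, hμ1, neg_zero]
              · simp only [neg_smul, Finset.sum_neg_distrib, hμp, neg_zero]
              · push_neg at hsign
                have hns : ∑ x ∈ A, -μ x * s x = -∑ x ∈ A, μ x * s x := by
                  rw [← Finset.sum_neg_distrib]
                  exact Finset.sum_congr rfl fun x _ => by ring
                rw [hns]
                linarith
              · obtain ⟨x, hx, hxne⟩ := hμne
                exact ⟨x, hx, by simpa using hxne⟩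
          obtain ⟨A', w', hssub, hclt, hpos', hsum', hbary', hval'⟩ := hstep
          have hcard' : A'.card ≤ N := by omega
          obtain ⟨l, ys, h1, h2, h3, h4⟩ := ih A' w' p t s hcard' hpos' hsum' hbary'
            (fun i hi => hle i (hssub hi))
          exact ⟨l, ys, h1, h2, h3, h4.trans (EReal.coe_le_coe_iff.mpr hval')⟩
        · -- finalize
          push_neg at hbig
          classical
          set l : T →₀ ℝ := ∑ i ∈ A, Finsupp.single (t i) (w i) with hl
          have hlapp : ∀ i ∈ A, l (t i) = w i := by
            intro i hi
            rw [hl, Finset.sum_apply']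
            rw [Finset.sum_eq_single i]
            · rw [Finsupp.single_eq_same]
            · intro j hj hne
              rw [Finsupp.single_apply, if_neg]
              exact fun heq => hne (hinj hj hi heq)
            · intro hni
              exact absurd hi hni
          have hlapp0 : ∀ u, u ∉ A.image t → l u = 0 := by
            intro u hu
            rw [hl, Finset.sum_apply']
            refine Finset.sum_eq_zero fun j hj => ?_
            rw [Finsupp.single_apply, if_neg]
            exact fun heq => hu (heq ▸ Finset.mem_image_of_mem t hj)
          have hsupp : l.support = A.image t := by
            ext u
            simp only [Finsupp.mem_support_iff]
            constructor
            · intro hne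
              by_contra hc
              exact hne (hlapp0 u hc)
            · intro hu
              obtain ⟨i, hi, rfl⟩ := Finset.mem_image.mp hu
              rw [hlapp i hi]
              exact (hpos i hi).ne'
          have hchoice : ∀ u : T, ∃ x : En n, ∀ i ∈ A, t i = u → x = p i := by
            intro u
            by_cases hu : ∃ i ∈ A, t i = u
            · obtain ⟨i, hi, hti⟩ := hu
              exact ⟨p i, fun j hj htj => by rw [hinj hj hi (htj.trans hti.symm)]⟩
            · exact ⟨0, fun j hj htj => absurd ⟨j, hj, htj⟩ hu⟩
          choose ys hys using hchoice
          have hinj' : ∀ x ∈ A, ∀ y ∈ A, t x = t y → x = y := fun a ha b hb => hinj ha hb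
          refine ⟨l, ys, ⟨?_, ?_⟩, ?_, ?_, ?_⟩
          · intro u
            by_cases hu : u ∈ A.image t
            · obtain ⟨i, hi, rfl⟩ := Finset.mem_image.mp hu
              rw [hlapp i hi]
              refine ⟨(hpos i hi).le, ?_⟩
              calc w i ≤ ∑ j ∈ A, w j :=
                    Finset.single_le_sum (fun j hj => (hpos j hj).le) hi
                _ = 1 := hsum
            · rw [hlapp0 u hu]
              norm_num
          · rw [hsupp, Finset.sum_image hinj']
            rw [Finset.sum_congr rfl fun i hi => hlapp i hi]
            exact hsum
          · rw [hsupp]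
            refine le_min ?_ ?_
            · rw [Finset.card_image_of_injOn hinj]
              have h6 : (A.card : ℕ∞) ≤ ((n + 1 : ℕ) : ℕ∞) := Nat.cast_le.mpr hbig
              simpa using h6
            · exact finset_card_le_enat _
          · rw [hsupp, Finset.sum_image hinj']
            rw [show (∑ i ∈ A, l (t i) • ys (t i)) = ∑ i ∈ A, w i • p i from
              Finset.sum_congr rfl fun i hi => by rw [hlapp i hi, hys (t i) i hi rfl]]
            exact hbary
          · rw [hsupp, Finset.sum_image hinj']
            calc ∑ i ∈ A, (l (t i) : EReal) * conjF (f (t i)) (ys (t i))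
                = ∑ i ∈ A, (w i : EReal) * conjF (f (t i)) (p i) :=
                  Finset.sum_congr rfl fun i hi => by rw [hlapp i hi, hys (t i) i hi rfl]
              _ ≤ ∑ i ∈ A, ((w i : EReal) * (s i : EReal)) :=
                  Finset.sum_le_sum fun i hi =>
                    mul_le_mul_of_nonneg_left (hle i hi) (by exact_mod_cast (hpos i hi).le)
              _ = ((∑ i ∈ A, w i * s i : ℝ) : EReal) := by
                  rw [coe_sum']
                  exact Finset.sum_congr rfl fun i _ => (EReal.coe_mul _ _).symm
      · -- merge step
        rw [Set.InjOn] at hinj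
        push_neg at hinj
        obtain ⟨i, hi, j, hj, hteq, hne⟩ := hinj
        have hiA : i ∈ A := hi
        have hjA : j ∈ A := hj
        set W := w i + w j with hW
        have hWpos : 0 < W := add_pos (hpos i hiA) (hpos j hjA)
        set a := w i / W with ha
        set b := w j / W with hb
        have hab : a + b = 1 := by
          rw [ha, hb, ← add_div, hW, div_self hWpos.ne']
        have hann : 0 ≤ a := div_nonneg (hpos i hiA).le hWpos.le
        have hbnn : 0 ≤ b := div_nonneg (hpos j hjA).le hWpos.le
        have hlej : conjF (f (t i)) (p j) ≤ ((s j : ℝ) : EReal) := by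
          rw [hteq]
          exact hle j hjA
        have hq := conj_convex hann hbnn hab (hle i hiA) hlej
        set q := a • p i + b • p j with hqdef
        set sq := a * s i + b * s j with hsqdef
        set A' := A.erase j with hA'
        have hiA' : i ∈ A' := Finset.mem_erase.mpr ⟨hne, hiA⟩
        set w' := Function.update w i W with hw'
        set p' := Function.update p i q with hp'
        set s' := Function.update s i sq with hs'
        have hcard' : A'.card ≤ N := by
          rw [hA', Finset.card_erase_of_mem hjA]
          omega
        have eW : W • q = w i • p i + w j • p j := by
          rw [hqdef, smul_add, smul_smul, smul_smul]
          congr 1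
          · congr 1
            rw [ha, mul_div_cancel₀ _ hWpos.ne']
          · congr 1
            rw [hb, mul_div_cancel₀ _ hWpos.ne']
        have esq : W * sq = w i * s i + w j * s j := by
          rw [hsqdef, ha, hb]
          field_simp
        have hupdw : ∀ x, x ≠ i → w' x = w x := fun x hx => Function.update_of_ne hx _ _
        have hupdp : ∀ x, x ≠ i → p' x = p x := fun x hx => Function.update_of_ne hx _ _
        have hupds : ∀ x, x ≠ i → s' x = s x := fun x hx => Function.update_of_ne hx _ _
        have hpos' : ∀ x ∈ A', 0 < w' x := by
          intro x hx
          by_cases hxi : x = i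
          · subst hxi
            rw [hw', Function.update_self]
            exact hWpos
          · rw [hupdw x hxi]
            exact hpos x (Finset.mem_of_mem_erase hx)
        have hle' : ∀ x ∈ A', conjF (f (t x)) (p' x) ≤ (s' x : EReal) := by
          intro x hx
          by_cases hxi : x = i
          · subst hxi
            rw [hp', hs', Function.update_self, Function.update_self]
            exact hq
          · rw [hupdp x hxi, hupds x hxi]
            exact hle x (Finset.mem_of_mem_erase hx)
        have hsum3 : w j + ∑ x ∈ A', w x = ∑ x ∈ A, w x := Finset.add_sum_erase A w hjA
        have hsum4 : w i + ∑ x ∈ A'.erase i, w x = ∑ x ∈ A', w x := Finset.add_sum_erase A' w hiA'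
        have hsum' : ∑ x ∈ A', w' x = 1 := by
          rw [← Finset.add_sum_erase A' w' hiA']
          have h2 : ∑ x ∈ A'.erase i, w' x = ∑ x ∈ A'.erase i, w x :=
            Finset.sum_congr rfl fun x hx => hupdw x (Finset.mem_erase.mp hx).1
          rw [h2, hw', Function.update_self, hW]
          rw [hsum] at hsum3
          linarith
        have hbary3 : w j • p j + ∑ x ∈ A', w x • p x = ∑ x ∈ A, w x • p x :=
          Finset.add_sum_erase A (fun x => w x • p x) hjA
        have hbary4 : w i • p i + ∑ x ∈ A'.erase i, w x • p x = ∑ x ∈ A', w x • p x :=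
          Finset.add_sum_erase A' (fun x => w x • p x) hiA'
        have hbary' : ∑ x ∈ A', w' x • p' x = y := by
          rw [← Finset.add_sum_erase A' (fun x => w' x • p' x) hiA']
          have h2 : ∑ x ∈ A'.erase i, w' x • p' x = ∑ x ∈ A'.erase i, w x • p x :=
            Finset.sum_congr rfl fun x hx => by
              rw [hupdw x (Finset.mem_erase.mp hx).1, hupdp x (Finset.mem_erase.mp hx).1]
          have h1 : w' i • p' i = W • q := by
            rw [hw', hp', Function.update_self, Function.update_self]
          rw [h1, h2, eW]
          calc w i • p i + w j • p j + ∑ x ∈ A'.erase i, w x • p x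
              = w j • p j + (w i • p i + ∑ x ∈ A'.erase i, w x • p x) := by abel
            _ = w j • p j + ∑ x ∈ A', w x • p x := by rw [hbary4]
            _ = ∑ x ∈ A, w x • p x := hbary3
            _ = y := hbary
        have hval3 : w j * s j + ∑ x ∈ A', w x * s x = ∑ x ∈ A, w x * s x :=
          Finset.add_sum_erase A (fun x => w x * s x) hjA
        have hval4 : w i * s i + ∑ x ∈ A'.erase i, w x * s x = ∑ x ∈ A', w x * s x :=
          Finset.add_sum_erase A' (fun x => w x * s x) hiA'
        have hval' : ∑ x ∈ A', w' x * s' x = ∑ x ∈ A, w x * s x := by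
          rw [← Finset.add_sum_erase A' (fun x => w' x * s' x) hiA']
          have h2 : ∑ x ∈ A'.erase i, w' x * s' x = ∑ x ∈ A'.erase i, w x * s x :=
            Finset.sum_congr rfl fun x hx => by
              rw [hupdw x (Finset.mem_erase.mp hx).1, hupds x (Finset.mem_erase.mp hx).1]
          have h1 : w' i * s' i = W * sq := by
            rw [hw', hs', Function.update_self, Function.update_self]
          rw [h1, h2, esq]
          linarith
        obtain ⟨l, ys, h1, h2, h3, h4⟩ := ih A' w' p' t s' hcard' hpos' hsum' hbary' hle'
        rw [hval'] at h4
        exact ⟨l, ys, h1, h2, h3, h4⟩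

end KeyMain


/-- For `h := inf_t f_t*`, the convex hull function `co h` is given by
the infimum of finite convex combinations `Σ λ_t f_t*(y_t)` over `λ ∈ Δ(T)` and points
`y_t` with `Σ λ_t y_t = y`; moreover the infimum is unchanged when restricted to
`λ` with `#supp λ ≤ min (n+1) (#T)`. -/
theorem statement1 {n : ℕ} {T : Type*} (f : T → En n → EReal)
    (h : En n → EReal) (hdef : ∀ y, h y = ⨅ t, conjF (f t) y) (y : En n) :
    coF h y = sInf {v : EReal | ∃ (l : T →₀ ℝ) (ys : T → En n),
        inSimplex l ∧ (∑ t ∈ l.support, l t • ys t) = y ∧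
        v = ∑ t ∈ l.support, (l t : EReal) * conjF (f t) (ys t)} ∧
    coF h y = sInf {v : EReal | ∃ (l : T →₀ ℝ) (ys : T → En n),
        inSimplex l ∧ ((l.support.card : ℕ∞) ≤ min ((n : ℕ∞) + 1) (ENat.card T)) ∧
        (∑ t ∈ l.support, l t • ys t) = y ∧
        v = ∑ t ∈ l.support, (l t : EReal) * conjF (f t) (ys t)} := by
  classical
  set S1 := {v : EReal | ∃ (l : T →₀ ℝ) (ys : T → En n),
      inSimplex l ∧ (∑ t ∈ l.support, l t • ys t) = y ∧
      v = ∑ t ∈ l.support, (l t : EReal) * conjF (f t) (ys t)} with hS1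
  set S2 := {v : EReal | ∃ (l : T →₀ ℝ) (ys : T → En n),
      inSimplex l ∧ ((l.support.card : ℕ∞) ≤ min ((n : ℕ∞) + 1) (ENat.card T)) ∧
      (∑ t ∈ l.support, l t • ys t) = y ∧
      v = ∑ t ∈ l.support, (l t : EReal) * conjF (f t) (ys t)} with hS2
  have hsub21 : S2 ⊆ S1 := by
    rintro v ⟨l, ys, hsim, _, hbary, rfl⟩
    exact ⟨l, ys, hsim, hbary, rfl⟩
  -- Part A : coF h y is a lower bound for S1
  have hA : ∀ v ∈ S1, coF h y ≤ v := by
    rintro v ⟨l, ys, ⟨hl01, hlsum⟩, hbary, rfl⟩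
    by_cases hbot : ∃ u ∈ l.support, conjF (f u) (ys u) = ⊥
    · obtain ⟨u, hu, hub⟩ := hbot
      have hbotall : ∀ x, h x = ⊥ := by
        intro x
        refine le_bot_iff.mp ?_
        rw [hdef x]
        exact (iInf_le _ u).trans (le_of_eq (conj_bot_everywhere hub x))
      have hepi : epiS h = Set.univ := by
        ext pt
        simp [epiS, hbotall]
      have hcoF : coF h y = ⊥ := by
        rw [coF, hepi, convexHull_univ]
        refine le_bot_iff.mp ?_
        rw [← EReal.le_of_forall_lt_iff_le]
        intro z hz
        exact sInf_le ⟨z, by simp, rfl⟩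
      rw [hcoF]
      exact bot_le
    · push_neg at hbot
      by_cases htop : ∃ u ∈ l.support, conjF (f u) (ys u) = ⊤
      · have hvt : ∑ u ∈ l.support, (l u : EReal) * conjF (f u) (ys u) = ⊤ := by
          have hlpos : ∀ u ∈ l.support, 0 < l u := fun u hu =>
            lt_of_le_of_ne (hl01 u).1 (Ne.symm (Finsupp.mem_support_iff.mp hu))
          refine sum_eq_top _ _ (fun u hu => ?_) ?_
          · intro hc
            cases hx : conjF (f u) (ys u) with
            | bot => exact hbot u hu hx
            | top =>
              rw [hx, EReal.mul_top_of_pos (by exact_mod_cast hlpos u hu)] at hc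
              simp at hc
            | coe rr =>
              rw [hx, ← EReal.coe_mul] at hc
              exact EReal.coe_ne_bot _ hc
          · obtain ⟨u, hu, hut⟩ := htop
            refine ⟨u, hu, ?_⟩
            rw [hut]
            exact EReal.mul_top_of_pos (by exact_mod_cast hlpos u hu)
        rw [hvt]
        exact le_top
      · push_neg at htop
        have hch : ∀ u : T, ∃ r : ℝ, u ∈ l.support → conjF (f u) (ys u) = (r : EReal) := by
          intro u
          by_cases hu : u ∈ l.support
          · cases hcu : conjF (f u) (ys u) with
            | bot => exact absurd hcu (hbot u hu)
            | top => exact absurd hcu (htop u hu)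
            | coe r => exact ⟨r, fun _ => rfl⟩
          · exact ⟨0, fun hc => absurd hc hu⟩
        choose sv hsv using hch
        have hmem : (y, ∑ u ∈ l.support, l u * sv u) ∈ convexHull ℝ (epiS h) := by
          have hz : ∀ u ∈ l.support, ((ys u, sv u) : En n × ℝ) ∈ epiS h := by
            intro u hu
            show h (ys u) ≤ ((sv u : ℝ) : EReal)
            rw [hdef]
            exact (iInf_le _ u).trans (le_of_eq (hsv u hu))
          have hmm := Finset.centerMass_mem_convexHull l.support
            (fun u _ => (hl01 u).1) (by rw [hlsum]; norm_num) hz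
          rw [Finset.centerMass_eq_of_sum_1 _ _ hlsum] at hmm
          have heq : ∑ u ∈ l.support, l u • ((ys u, sv u) : En n × ℝ)
              = (y, ∑ u ∈ l.support, l u * sv u) := by
            refine Prod.ext ?_ ?_
            · rw [Prod.fst_sum]
              simpa using hbary
            · rw [Prod.snd_sum]
              simp [smul_eq_mul]
          rwa [heq] at hmm
        calc coF h y ≤ ((∑ u ∈ l.support, l u * sv u : ℝ) : EReal) := sInf_le ⟨_, hmem, rfl⟩
          _ = ∑ u ∈ l.support, (l u : EReal) * conjF (f u) (ys u) := by
              rw [coe_sum']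
              refine Finset.sum_congr rfl fun u hu => ?_
              rw [hsv u hu, ← EReal.coe_mul]
  -- Part B : sInf S2 ≤ coF h y
  have hB : sInf S2 ≤ coF h y := by
    rw [coF]
    refine le_sInf ?_
    rintro b ⟨r, hr, rfl⟩
    refine le_coe_of_forall_eps fun ε hε => ?_
    rw [convexHull_eq] at hr
    obtain ⟨ι, B, wt, z, hw0, hw1, hz, hcm⟩ := hr
    rw [Finset.centerMass_eq_of_sum_1 _ _ hw1] at hcm
    classical
    set B' := B.filter (fun i => 0 < wt i) with hB'
    have hsubB : B' ⊆ B := Finset.filter_subset _ _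
    have hzeroB : ∀ i ∈ B, i ∉ B' → wt i = 0 := by
      intro i hi hni
      rcases (hw0 i hi).eq_or_lt with hh | hh
      · exact hh.symm
      · exact absurd (Finset.mem_filter.mpr ⟨hi, hh⟩) hni
    have hw1' : ∑ i ∈ B', wt i = 1 := by
      rw [Finset.sum_subset hsubB (fun i hi hni => hzeroB i hi hni)]
      exact hw1
    have hcm' : ∑ i ∈ B', wt i • z i = (y, r) := by
      rw [Finset.sum_subset hsubB (fun i hi hni => by rw [hzeroB i hi hni, zero_smul])]
      exact hcm
    have hBne : B'.Nonempty := by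
      by_contra hc
      rw [Finset.not_nonempty_iff_eq_empty] at hc
      rw [hc] at hw1'
      simp at hw1'
    have hgetu : ∀ i ∈ B', ∃ u : T, conjF (f u) ((z i).1) < (((z i).2 + ε : ℝ) : EReal) := by
      intro i hi
      have hzi := hz i (hsubB hi)
      have hlt : h ((z i).1) < (((z i).2 + ε : ℝ) : EReal) :=
        lt_of_le_of_lt hzi (by exact_mod_cast lt_add_of_pos_right _ hε)
      rw [hdef] at hlt
      exact iInf_lt_iff.mp hlt
    obtain ⟨i₀, hi₀⟩ := hBne
    obtain ⟨u₀, _⟩ := hgetu i₀ hi₀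
    have hex : ∀ i : ι, ∃ u : T, i ∈ B' → conjF (f u) ((z i).1) < (((z i).2 + ε : ℝ) : EReal) := by
      intro i
      by_cases hi : i ∈ B'
      · obtain ⟨u, hu⟩ := hgetu i hi
        exact ⟨u, fun _ => hu⟩
      · exact ⟨u₀, fun hc => absurd hc hi⟩
    choose tg htg using hex
    have hbary1 : ∑ i ∈ B', wt i • (z i).1 = y := by
      have := congrArg Prod.fst hcm'
      rw [Prod.fst_sum] at this
      simpa using this
    have hsnd : ∑ i ∈ B', wt i * (z i).2 = r := by
      have := congrArg Prod.snd hcm'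
      rw [Prod.snd_sum] at this
      simpa [smul_eq_mul] using this
    obtain ⟨l, ys, hsim, hcard, hbary2, hval⟩ :=
      key_lemma f y B'.card B' wt (fun i => (z i).1) tg (fun i => (z i).2 + ε) le_rfl
        (fun i hi => (Finset.mem_filter.mp hi).2) hw1' hbary1
        (fun i hi => (htg i hi).le)
    have hvs : ∑ i ∈ B', wt i * ((z i).2 + ε) = r + ε := by
      have hexp : ∀ i, wt i * ((z i).2 + ε) = wt i * (z i).2 + wt i * ε := fun i => by ring
      rw [Finset.sum_congr rfl fun i _ => hexp i, Finset.sum_add_distrib, hsnd,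
        ← Finset.sum_mul, hw1', one_mul]
    rw [hvs] at hval
    calc sInf S2 ≤ ∑ u ∈ l.support, (l u : EReal) * conjF (f u) (ys u) :=
          sInf_le ⟨l, ys, hsim, hcard, hbary2, rfl⟩
      _ ≤ ((r + ε : ℝ) : EReal) := hval
  have h1 : coF h y ≤ sInf S1 := le_sInf hA
  have h12 : sInf S1 ≤ sInf S2 := sInf_le_sInf hsub21
  constructor
  · exact le_antisymm h1 (h12.trans hB)
  · exact le_antisymm (h1.trans h12) hB
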